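/- arXiv:1702.00847 — 4 statements merged into one kernel-verified Lean document; each statement's English description precedes it below -/
import Mathlib

section
/- If a propositional clause C contains a literal L exactly once, and every binary resolvent of C upon L with clauses of a propositional CNF formula F \ {C} is a tautology (contains a complementary pair of literals), then for any assignment α falsifying C, the assignment α' obtained from α by flipping the truth value of the atom of L satisfies every clause of F \ {C} that α satisfies. -/
/-- A propositional literal: an atom together with a polarity. -/
abbrev PLit (α : Type) := α × Bool

/-- The complement of a literal. -/
def PLit.compl {α : Type} (l : PLit α) : PLit α := (l.1, !l.2)

/-- A propositional clause is a (finite) set of literals. -/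
abbrev PClause (α : Type) := Finset (PLit α)

/-- A literal is true under an assignment. -/
def plitTrue {α : Type} (v : α → Bool) (l : PLit α) : Prop := v l.1 = l.2

/-- An assignment satisfies a clause if it makes some literal true. -/
def psat {α : Type} (v : α → Bool) (C : PClause α) : Prop := ∃ l ∈ C, plitTrue v l

/-- A clause is a tautology if it contains a complementary pair of literals. -/
def ptaut {α : Type} (C : PClause α) : Prop := ∃ l ∈ C, PLit.compl l ∈ C

/-- Flip the truth value of the atom `a`. -/
def pflip {α : Type} [DecidableEq α] (v : α → Bool) (a : α) : α → Bool :=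
  fun b => if b = a then !(v b) else v b

/-- If clause `C` contains `L` (exactly once, clauses being sets of literals) and every binary
resolvent of `C` upon `L` with a clause of `F \ {C}` is a tautology, then flipping the atom of
`L` in an assignment falsifying `C` preserves satisfaction of all clauses of `F \ {C}`. -/
theorem stmt0 {α : Type} [DecidableEq α] (F : Set (PClause α)) (C : PClause α) (L : PLit α)
    (hL : L ∈ C)
    (hres : ∀ D ∈ F, D ≠ C → L.compl ∈ D → ptaut (C.erase L ∪ D.erase L.compl))
    (v : α → Bool) (hfal : ¬ psat v C) :
    ∀ D ∈ F, D ≠ C → psat v D → psat (pflip v L.1) D := by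
  intro D hD hne hsat
  have hfal' : ∀ x ∈ C, ¬ plitTrue v x := fun x hx ht => hfal ⟨x, hx, ht⟩
  have hvL : v L.1 = !L.2 := by
    have := hfal' L hL
    simp [plitTrue] at this
    cases hb : L.2 <;> simp_all
  obtain ⟨l, hl, hlt⟩ := hsat
  by_cases h1 : l.1 = L.1
  · have hlc : l = L.compl := by
      have : l.2 = !L.2 := by rw [plitTrue, h1, hvL] at hlt; exact hlt.symm
      cases l; simp_all [PLit.compl]
    obtain ⟨m, hm, hmc⟩ := hres D hD hne (hlc ▸ hl)
    have lemA : ∀ x ∈ C.erase L, ¬ plitTrue (pflip v L.1) x := by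
      intro x hx ht
      obtain ⟨hxne, hxC⟩ := Finset.mem_erase.mp hx
      have hxf := hfal' x hxC
      by_cases h2 : x.1 = L.1
      · rw [plitTrue, pflip] at ht
        simp [h2, hvL] at ht
        exact hxne (Prod.ext h2 ht.symm)
      · rw [plitTrue, pflip] at ht
        simp [h2] at ht
        exact hxf ht
    have key : plitTrue (pflip v L.1) m ∨ plitTrue (pflip v L.1) m.compl := by
      by_cases h : pflip v L.1 m.1 = m.2
      · exact Or.inl h
      · right
        simp [plitTrue, PLit.compl]
        cases hb : m.2 <;> simp_all
    rcases key with h | h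
    · rcases Finset.mem_union.mp hm with h' | h'
      · exact absurd h (lemA m h')
      · exact ⟨m, Finset.mem_of_mem_erase h', h⟩
    · rcases Finset.mem_union.mp hmc with h' | h'
      · exact absurd h (lemA _ h')
      · exact ⟨m.compl, Finset.mem_of_mem_erase h', h⟩
  · exact ⟨l, hl, by rw [plitTrue, pflip]; simp [h1]; exact hlt⟩
end

section
/- Let C be a propositional clause blocked by a literal L in a CNF formula F, meaning C contains L exactly once and every binary resolvent of C upon L with a clause from F \ {C} is a tautology. Then F \ {C} is satisfiable if and only if F ∪ {C} is satisfiable. -/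
/-- A propositional clause blocked by a literal `L` in `F` is redundant:
`F \ {C}` is satisfiable iff `F ∪ {C}` is satisfiable. -/
theorem stmt1 {α : Type} [DecidableEq α] (F : Set (PClause α)) (C : PClause α) (L : PLit α)
    (hL : L ∈ C)
    (hblocked : ∀ D ∈ F, D ≠ C → L.compl ∈ D → ptaut (C.erase L ∪ D.erase L.compl)) :
    (∃ v : α → Bool, ∀ D ∈ F \ {C}, psat v D) ↔
    (∃ v : α → Bool, ∀ D ∈ F ∪ {C}, psat v D) := by
  constructor
  · rintro ⟨v, hv⟩
    by_cases hC : psat v C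
    · refine ⟨v, fun D hD => ?_⟩
      rcases hD with hD | hD
      · by_cases hDC : D = C
        · exact hDC ▸ hC
        · exact hv D ⟨hD, hDC⟩
      · exact (Set.mem_singleton_iff.mp hD) ▸ hC
    · -- v falsifies every literal of C
      have hfalse : ∀ l ∈ C, v l.1 = !l.2 := by
        intro l hl
        have : ¬ plitTrue v l := fun h => hC ⟨l, hl, h⟩
        unfold plitTrue at this
        cases h : v l.1 <;> cases h2 : l.2 <;> simp_all
      set w := pflip v L.1 with hw
      have hwL : plitTrue w L := by
        have := hfalse L hL
        simp [hw, pflip, plitTrue, this]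
      have hagree : ∀ b : α, b ≠ L.1 → w b = v b := by
        intro b hb; simp [hw, pflip, hb]
      -- key fact: a literal in C.erase L has atom ≠ L.1 and its complement is true under w
      have hkey : ∀ l ∈ C.erase L, l.1 ≠ L.1 ∧ plitTrue w l.compl := by
        intro l hl
        obtain ⟨hne, hlC⟩ := Finset.mem_erase.mp hl
        have h1 : v l.1 = !l.2 := hfalse l hlC
        have h2 : v L.1 = !L.2 := hfalse L hL
        have hne1 : l.1 ≠ L.1 := by
          intro h
          apply hne
          have : l.2 = L.2 := by
            rw [h] at h1; rw [h2] at h1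
            cases h3 : l.2 <;> cases h4 : L.2 <;> simp_all
          exact Prod.ext h this
        refine ⟨hne1, ?_⟩
        unfold plitTrue PLit.compl
        simp only
        rw [hagree l.1 hne1, h1]
      refine ⟨w, fun D hD => ?_⟩
      by_cases hDC : D = C
      · exact hDC ▸ ⟨L, hL, hwL⟩
      have hDF : D ∈ F := by
        rcases hD with hD | hD
        · exact hD
        · exact absurd (Set.mem_singleton_iff.mp hD) hDC
      by_cases hLD : L.compl ∈ D
      · -- blocked case
        obtain ⟨l, hl, hl2⟩ := hblocked D hDF hDC hLD
        rcases Finset.mem_union.mp hl with hlc | hld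
        · rcases Finset.mem_union.mp hl2 with hl2c | hl2d
          · -- both l and l.compl in C.erase L : impossible since v falsifies C
            exfalso
            have h1 := hfalse l ((Finset.mem_erase.mp hlc).2)
            have h2 := hfalse l.compl ((Finset.mem_erase.mp hl2c).2)
            unfold PLit.compl at h2
            simp only at h2
            rw [h1] at h2
            exact absurd h2 (by simp)
          · exact ⟨l.compl, (Finset.mem_erase.mp hl2d).2, (hkey l hlc).2⟩
        · rcases Finset.mem_union.mp hl2 with hl2c | hl2d
          · -- l.compl ∈ C.erase L, l ∈ D
            have := (hkey l.compl hl2c).2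
            have hcc : l.compl.compl = l := by
              unfold PLit.compl; simp
            rw [hcc] at this
            exact ⟨l, (Finset.mem_erase.mp hld).2, this⟩
          · -- both l and l.compl in D.erase L.compl
            have hne1 : l.1 ≠ L.1 := by
              intro h
              have hne := (Finset.mem_erase.mp hld).1
              have hne2 := (Finset.mem_erase.mp hl2d).1
              unfold PLit.compl at hne hne2
              rcases Bool.eq_or_eq_not l.2 L.2 with h2 | h2
              · exact hne2 (by simp [Prod.ext_iff, h, h2])
              · exact hne (Prod.ext h (by simp [h2]))
            have hwv := hagree l.1 hne1
            rcases Bool.eq_or_eq_not (w l.1) l.2 with h2 | h2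
            · exact ⟨l, (Finset.mem_erase.mp hld).2, h2⟩
            · refine ⟨l.compl, (Finset.mem_erase.mp hl2d).2, ?_⟩
              unfold plitTrue PLit.compl
              simpa using h2
      · -- L.compl ∉ D : v's witness works for w
        obtain ⟨l, hlD, hlt⟩ := hv D ⟨hDF, hDC⟩
        have hne1 : l.1 ≠ L.1 := by
          intro h
          apply hLD
          have h2 : v L.1 = !L.2 := hfalse L hL
          have : l.2 = !L.2 := by
            unfold plitTrue at hlt; rw [h, h2] at hlt; exact hlt.symm
          have : l = L.compl := Prod.ext h this
          exact this ▸ hlD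
        exact ⟨l, hlD, by unfold plitTrue at hlt ⊢; rw [hagree l.1 hne1]; exact hlt⟩
  · rintro ⟨v, hv⟩
    exact ⟨v, fun D hD => hv D (Or.inl hD.1)⟩
end

section
/- Let C = L ∨ C' and D = N₁ ∨ … ∨ N_l ∨ D' be variable-disjoint first-order clauses without equality, let λ and τ be ground substitutions with N_iτ = ¬Lλ for all i and with no other literal of Dτ equal to ¬Lλ. If the L-resolvent of C and D obtained via a most general unifier σ of L, ¬N₁, …, ¬N_l is valid (contains a complementary pair of literals), then the ground clause C'λ ∨ (D \ {N₁,…,N_l})τ contains a complementary pair of ground literals. -/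
/-- First-order terms over variables `V` and function symbols `Fn`. -/
inductive Term (V Fn : Type) : Type
  | var : V → Term V Fn
  | app : Fn → List (Term V Fn) → Term V Fn

/-- A substitution maps variables to terms. -/
abbrev Subst (V Fn : Type) := V → Term V Fn

/-- Applying a substitution to a term. -/
def Term.subst {V Fn : Type} (σ : Subst V Fn) : Term V Fn → Term V Fn
  | .var v => σ v
  | .app f ts => .app f (ts.attach.map (fun t => Term.subst σ t.1))
  decreasing_by have := List.sizeOf_lt_of_mem t.2; simp at *; omega

/-- The set of variables occurring in a term. -/
def Term.vars {V Fn : Type} : Term V Fn → Set V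
  | .var v => {v}
  | .app _ ts => {x | ∃ t ∈ ts.attach, x ∈ Term.vars t.1}
  decreasing_by have := List.sizeOf_lt_of_mem t.2; simp at *; omega

/-- A term is ground if it contains no variables. -/
def Term.IsGround {V Fn : Type} (t : Term V Fn) : Prop := t.vars = ∅

/-- Composition of substitutions: `σ.comp γ` is "first σ, then γ". -/
def Subst.comp {V Fn : Type} (σ γ : Subst V Fn) : Subst V Fn :=
  fun v => (σ v).subst γ

/-- An atom: a predicate symbol applied to a list of argument terms. -/
structure Atom (V Fn P : Type) where
  pred : P
  args : List (Term V Fn)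

/-- A literal: an atom with a polarity (`true` = positive). -/
structure Lit (V Fn P : Type) where
  pol : Bool
  atom : Atom V Fn P

/-- The complement of a literal. -/
def Lit.compl {V Fn P : Type} (l : Lit V Fn P) : Lit V Fn P := ⟨!l.pol, l.atom⟩

def Atom.subst {V Fn P : Type} (σ : Subst V Fn) (A : Atom V Fn P) : Atom V Fn P :=
  ⟨A.pred, A.args.map (Term.subst σ)⟩

def Lit.subst {V Fn P : Type} (σ : Subst V Fn) (l : Lit V Fn P) : Lit V Fn P :=
  ⟨l.pol, l.atom.subst σ⟩

/-- A clause is a multiset (disjunction) of literals. -/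
abbrev Clause (V Fn P : Type) := Multiset (Lit V Fn P)

def Clause.subst {V Fn P : Type} (σ : Subst V Fn) (C : Clause V Fn P) : Clause V Fn P :=
  C.map (Lit.subst σ)

def Atom.vars {V Fn P : Type} (A : Atom V Fn P) : Set V := {x | ∃ t ∈ A.args, x ∈ t.vars}
def Lit.vars {V Fn P : Type} (l : Lit V Fn P) : Set V := l.atom.vars
def Clause.vars {V Fn P : Type} (C : Clause V Fn P) : Set V := {x | ∃ l ∈ C, x ∈ l.vars}

/-- A clause is ground if it contains no variables. -/
def Clause.IsGround {V Fn P : Type} (C : Clause V Fn P) : Prop := C.vars = ∅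

/-- A substitution `σ` unifies a list of literals if it maps them all to the same literal. -/
def IsUnifier {V Fn P : Type} (σ : Subst V Fn) (ls : List (Lit V Fn P)) : Prop :=
  ∀ l₁ ∈ ls, ∀ l₂ ∈ ls, l₁.subst σ = l₂.subst σ

/-- A most general unifier: every unifier factors through it. -/
def IsMGU {V Fn P : Type} (σ : Subst V Fn) (ls : List (Lit V Fn P)) : Prop :=
  IsUnifier σ ls ∧ ∀ τ, IsUnifier τ ls → ∃ γ, σ.comp γ = τ

/-- Validity of an equality-free clause: it contains a complementary pair of literals. -/
def Clause.ValidEF {V Fn P : Type} (C : Clause V Fn P) : Prop :=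
  ∃ A : Atom V Fn P, (⟨true, A⟩ : Lit V Fn P) ∈ C ∧ (⟨false, A⟩ : Lit V Fn P) ∈ C

/-- `C` (written as `L ∨ C'`) is blocked by `L` in `F`: all `L`-resolvents with clauses
of `F \ {L ∨ C'}` are valid. -/
def BlockedEF {V Fn P : Type} (L : Lit V Fn P) (C' : Clause V Fn P)
    (F : Set (Clause V Fn P)) : Prop :=
  ∀ D ∈ F, D ≠ L ::ₘ C' → ∀ Ns Drest : Clause V Fn P, Ns + Drest = D → Ns ≠ 0 →
    ∀ σ : Subst V Fn, IsMGU σ (L :: (Ns.map Lit.compl).toList) →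
      Clause.ValidEF (C'.subst σ + Drest.subst σ)

/-- A propositional assignment on (ground) atoms. -/
abbrev PAssign (V Fn P : Type) := Atom V Fn P → Bool

def litTrue {V Fn P : Type} (α : PAssign V Fn P) (l : Lit V Fn P) : Prop :=
  α l.atom = l.pol

/-- Propositional satisfaction of a (ground) clause. -/
def satC {V Fn P : Type} (α : PAssign V Fn P) (C : Clause V Fn P) : Prop :=
  ∃ l ∈ C, litTrue α l

/-- A first-order interpretation. -/
structure Interp (Fn P : Type) : Type 1 where
  dom : Type
  nonempty : Nonempty dom
  fn : Fn → List dom → dom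
  pr : P → List dom → Prop

def Term.eval {V Fn P : Type} (I : Interp Fn P) (ρ : V → I.dom) : Term V Fn → I.dom
  | .var v => ρ v
  | .app f ts => I.fn f (ts.attach.map (fun t => Term.eval I ρ t.1))
  decreasing_by have := List.sizeOf_lt_of_mem t.2; simp at *; omega

def litHolds {V Fn P : Type} (I : Interp Fn P) (ρ : V → I.dom) (l : Lit V Fn P) : Prop :=
  l.pol = true ↔ I.pr l.atom.pred (l.atom.args.map (Term.eval I ρ))

def clauseHolds {V Fn P : Type} (I : Interp Fn P) (ρ : V → I.dom) (C : Clause V Fn P) : Prop :=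
  ∃ l ∈ C, litHolds I ρ l

/-- First-order satisfiability of a CNF formula (clauses implicitly universally quantified). -/
def SatEF {V Fn P : Type} (F : Set (Clause V Fn P)) : Prop :=
  ∃ I : Interp Fn P, ∀ C ∈ F, ∀ ρ : V → I.dom, clauseHolds I ρ C



theorem Term.subst_subst {V Fn : Type} (σ γ : Subst V Fn) (t : Term V Fn) :
    (t.subst σ).subst γ = t.subst (Subst.comp σ γ) := by
  induction t using Term.subst.induct with
  | case1 v => simp [Term.subst, Subst.comp]
  | case2 f ts ih =>
    rw [Term.subst, Term.subst, Term.subst]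
    simp only [List.map_attach_eq_pmap, Term.app.injEq, true_and, List.map_pmap, List.pmap_eq_map]
    rw [List.map_map]
    exact List.map_congr_left (fun t ht => ih ⟨t, ht⟩)

theorem Term.subst_congr {V Fn : Type} (σ σ' : Subst V Fn) (t : Term V Fn)
    (h : ∀ v ∈ t.vars, σ v = σ' v) : t.subst σ = t.subst σ' := by
  induction t using Term.subst.induct with
  | case1 v => simp only [Term.subst]; exact h v (by simp [Term.vars])
  | case2 f ts ih =>
    rw [Term.subst, Term.subst]
    simp only [List.map_attach_eq_pmap, Term.app.injEq, true_and, List.pmap_eq_map]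
    refine List.map_congr_left (fun t ht => ih ⟨t, ht⟩ ?_)
    intro v hv
    exact h v (by rw [Term.vars]; exact ⟨⟨t, ht⟩, List.mem_attach _ _, hv⟩)

theorem Lit.subst_subst {V Fn P : Type} (σ γ : Subst V Fn) (l : Lit V Fn P) :
    (l.subst σ).subst γ = l.subst (Subst.comp σ γ) := by
  simp [Lit.subst, Atom.subst, List.map_map, Function.comp_def, Term.subst_subst]

theorem Lit.subst_congr {V Fn P : Type} (σ σ' : Subst V Fn) (l : Lit V Fn P)
    (h : ∀ v ∈ l.vars, σ v = σ' v) : l.subst σ = l.subst σ' := by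
  simp only [Lit.subst, Atom.subst, Lit.mk.injEq, Atom.mk.injEq, true_and]
  refine List.map_congr_left (fun t ht => Term.subst_congr _ _ _ ?_)
  intro v hv
  exact h v ⟨t, ht, hv⟩

theorem Lit.subst_compl {V Fn P : Type} (σ : Subst V Fn) (l : Lit V Fn P) :
    (l.compl).subst σ = (l.subst σ).compl := rfl

/-- Lifting lemma for `L`-resolvents: let `C = L ∨ C'` and `D = N₁ ∨ … ∨ N_l ∨ Drest` be
variable-disjoint clauses, `lam`/`τ` ground substitutions with `Nᵢτ = ¬Lλ` for all `i` and no
literal of `Drest τ` equal to `¬Lλ`.  If the `L`-resolvent via an mgu `σ` of `L, ¬N₁, …, ¬N_l`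
is valid, then the ground clause `C'λ ∨ Drest τ` contains a complementary pair. -/
theorem stmt4 {V Fn P : Type} (L : Lit V Fn P) (C' Ns Drest : Clause V Fn P)
    (lam τ σ : Subst V Fn)
    (hdisj : Clause.vars (L ::ₘ C') ∩ Clause.vars (Ns + Drest) = ∅)
    (hNs : Ns ≠ 0)
    (hground₁ : (Clause.subst lam (L ::ₘ C')).IsGround)
    (hground₂ : (Clause.subst τ (Ns + Drest)).IsGround)
    (hres : ∀ N ∈ Ns, N.subst τ = (L.subst lam).compl)
    (hrest : ∀ M ∈ Drest, M.subst τ ≠ (L.subst lam).compl)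
    (hmgu : IsMGU σ (L :: (Ns.map Lit.compl).toList))
    (hvalid : Clause.ValidEF (C'.subst σ + Drest.subst σ)) :
    Clause.ValidEF (C'.subst lam + Drest.subst τ) := by
  classical
  set μ : Subst V Fn := fun v => if v ∈ Clause.vars (L ::ₘ C') then lam v else τ v with hμ
  have hμC : ∀ l : Lit V Fn P, l ∈ (L ::ₘ C') → l.subst μ = l.subst lam := by
    intro l hl
    refine Lit.subst_congr _ _ _ (fun v hv => ?_)
    simp only [hμ, if_pos (show v ∈ Clause.vars (L ::ₘ C') from ⟨l, hl, hv⟩)]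
  have hμDv : ∀ v ∈ Clause.vars (Ns + Drest), μ v = τ v := by
    intro v hvD
    have hnot : v ∉ Clause.vars (L ::ₘ C') := by
      intro hvC
      have : v ∈ Clause.vars (L ::ₘ C') ∩ Clause.vars (Ns + Drest) := ⟨hvC, hvD⟩
      rw [hdisj] at this; exact this
    simp [hμ, hnot]
  have hμunif : IsUnifier μ (L :: (Ns.map Lit.compl).toList) := by
    have key : ∀ l ∈ (L :: (Ns.map Lit.compl).toList), l.subst μ = L.subst lam := by
      intro l hl
      rcases List.mem_cons.1 hl with h | h
      · rw [h]; exact hμC L (Multiset.mem_cons_self _ _)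
      · have hm : l ∈ Ns.map Lit.compl := by rwa [← Multiset.mem_toList]
        rcases Multiset.mem_map.1 hm with ⟨N, hN, rfl⟩
        have h1 : (N.compl).subst μ = (N.compl).subst τ := by
          refine Lit.subst_congr _ _ _ (fun v hv => ?_)
          exact hμDv v ⟨N, Multiset.mem_add.2 (Or.inl hN), hv⟩
        rw [h1, Lit.subst_compl, hres N hN]
        simp [Lit.compl]
    intro l1 h1 l2 h2
    rw [key l1 h1, key l2 h2]
  obtain ⟨γ, hγ⟩ := hmgu.2 μ hμunif
  have hmem : ∀ l ∈ C'.subst σ + Drest.subst σ,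
      l.subst γ ∈ C'.subst lam + Drest.subst τ := by
    intro l hl
    rcases Multiset.mem_add.1 hl with h | h
    · rcases Multiset.mem_map.1 h with ⟨m, hm, rfl⟩
      refine Multiset.mem_add.2 (Or.inl (Multiset.mem_map.2 ⟨m, hm, ?_⟩))
      rw [Lit.subst_subst, hγ, ← hμC m (Multiset.mem_cons.2 (Or.inr hm))]
    · rcases Multiset.mem_map.1 h with ⟨m, hm, rfl⟩
      refine Multiset.mem_add.2 (Or.inr (Multiset.mem_map.2 ⟨m, hm, ?_⟩))
      rw [Lit.subst_subst, hγ]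
      refine (Lit.subst_congr _ _ _ (fun v hv => ?_)).symm
      exact hμDv v ⟨m, Multiset.mem_add.2 (Or.inr hm), hv⟩
  obtain ⟨A, hA1, hA2⟩ := hvalid
  exact ⟨A.subst γ, hmem _ hA1, hmem _ hA2⟩
end

section
/- Equivalence flipping preserves satisfaction of ground instances of the equality axioms: if α is a propositional assignment on ground atoms satisfying all ground instances of the congruence axiom for a predicate P, namely t₁ ≉ s₁ ∨ … ∨ tₙ ≉ sₙ ∨ ¬P(t₁,…,tₙ) ∨ P(s₁,…,sₙ), and α' is obtained from α by equivalence flipping a ground literal L(u₁,…,uₙ) with predicate P, then α' also satisfies all ground instances of this axiom, provided α' agrees with α on all equality atoms. -/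
/-- Predicate symbols extended with the distinguished equality predicate `≈`. -/
inductive PSym (P : Type) : Type
  | eq
  | pr (p : P)

/-- The positive equality literal `s ≈ t`. -/
def eqL {V Fn P : Type} (s t : Term V Fn) : Lit V Fn (PSym P) := ⟨true, ⟨.eq, [s, t]⟩⟩
/-- The disequation literal `s ≉ t`. -/
def neqL {V Fn P : Type} (s t : Term V Fn) : Lit V Fn (PSym P) := ⟨false, ⟨.eq, [s, t]⟩⟩

/-- An interpretation interprets `≈` as identity on its domain. -/
def Interp.EqId {Fn P : Type} (I : Interp Fn (PSym P)) : Prop :=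
  ∀ a b : I.dom, I.pr .eq [a, b] ↔ a = b

/-- Validity in first-order logic with equality. -/
def ValidEq {V Fn P : Type} (C : Clause V Fn (PSym P)) : Prop :=
  ∀ I : Interp Fn (PSym P), I.EqId → ∀ ρ : V → I.dom, clauseHolds I ρ C

/-- Satisfiability in first-order logic with equality. -/
def SatEq {V Fn P : Type} (F : Set (Clause V Fn (PSym P))) : Prop :=
  ∃ I : Interp Fn (PSym P), I.EqId ∧ ∀ C ∈ F, ∀ ρ : V → I.dom, clauseHolds I ρ C

/-- The disequations `x₁ ≉ t₁ ∨ … ∨ xₙ ≉ tₙ` produced by flattening. -/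
def diseqs {V Fn P : Type} (xs : List V) (ts : List (Term V Fn)) : Clause V Fn (PSym P) :=
  ↑((xs.zip ts).map fun p => (neqL (Term.var p.1) p.2 : Lit V Fn (PSym P)))

/-- The flat `L`-resolvent of `L ∨ C'` with `Ns ∨ Drest` (resolving away the literals `Ns`,
all sharing `L`'s predicate with opposite polarity), using fresh variables `xs`
and the trivial mgu identifying all flattening variables. -/
def flatRes {V Fn P : Type} (xs : List V) (L : Lit V Fn (PSym P)) (C' : Clause V Fn (PSym P))
    (Ns Drest : Clause V Fn (PSym P)) : Clause V Fn (PSym P) :=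
  C' + Drest + diseqs xs L.atom.args + (Ns.map fun N => (diseqs xs N.atom.args : Clause V Fn (PSym P))).sum

/-- `L ∨ C'` is equality-blocked by `L` in `F`. -/
def EqBlocked {V Fn P : Type} (L : Lit V Fn (PSym P)) (C' : Clause V Fn (PSym P))
    (F : Set (Clause V Fn (PSym P))) : Prop :=
  L.atom.pred ≠ .eq ∧
  ∀ D ∈ F, D ≠ L ::ₘ C' → ∀ Ns Drest : Clause V Fn (PSym P), Ns + Drest = D → Ns ≠ 0 →
    (∀ N ∈ Ns, N.atom.pred = L.atom.pred ∧ N.pol = !L.pol ∧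
        N.atom.args.length = L.atom.args.length) →
    ∀ xs : List V, xs.Nodup → xs.length = L.atom.args.length →
      (∀ x ∈ xs, x ∉ Clause.vars (L ::ₘ C') ∧ x ∉ Clause.vars D) →
      ValidEq (flatRes xs L C' Ns Drest)

/-- Variable disequations `x₁ ≉ y₁ ∨ … ∨ xₙ ≉ yₙ`. -/
def varDiseqs {V Fn P : Type} (xs ys : List V) : Clause V Fn (PSym P) :=
  ↑((xs.zip ys).map fun p => (neqL (Term.var p.1) (Term.var p.2) : Lit V Fn (PSym P)))

/-- The equality axioms `E_L`: reflexivity, function congruence, predicate congruence. -/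
def ELset (V Fn P : Type) : Set (Clause V Fn (PSym P)) :=
  {C | (∃ x : V, C = {eqL (Term.var x) (Term.var x)}) ∨
       (∃ (f : Fn) (xs ys : List V), xs.length = ys.length ∧ (xs ++ ys).Nodup ∧
          C = varDiseqs xs ys +
              {eqL (Term.app f (xs.map Term.var)) (Term.app f (ys.map Term.var))}) ∨
       (∃ (p : PSym P) (xs ys : List V), xs.length = ys.length ∧ (xs ++ ys).Nodup ∧
          C = varDiseqs xs ys +
              {(⟨false, ⟨p, xs.map Term.var⟩⟩ : Lit V Fn (PSym P)),
               (⟨true, ⟨p, ys.map Term.var⟩⟩ : Lit V Fn (PSym P))})}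

open Classical in
/-- Equivalence flipping of the (ground) literal `L` with respect to `α`: invert the value of
every atom with `L`'s predicate whose arguments are `α`-equal to `L`'s arguments. -/
noncomputable def eqFlip {V Fn P : Type} (α : PAssign V Fn (PSym P)) (L : Lit V Fn (PSym P)) :
    PAssign V Fn (PSym P) := fun A =>
  if A.pred = L.atom.pred ∧ A.args.length = L.atom.args.length ∧
      (∀ p ∈ L.atom.args.zip A.args, α ⟨.eq, [p.1, p.2]⟩ = true)
  then !(α A) else α A


/-- A ground instance of the congruence axiom for the predicate `p` at argument lists
`ts`, `ss`: `t₁ ≉ s₁ ∨ … ∨ tₙ ≉ sₙ ∨ ¬p(t₁,…,tₙ) ∨ p(s₁,…,sₙ)`. -/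
def congrInst {V Fn P : Type} (p : PSym P) (ts ss : List (Term V Fn)) :
    Clause V Fn (PSym P) :=
  ↑((ts.zip ss).map fun q => (neqL q.1 q.2 : Lit V Fn (PSym P))) +
    {(⟨false, ⟨p, ts⟩⟩ : Lit V Fn (PSym P)), (⟨true, ⟨p, ss⟩⟩ : Lit V Fn (PSym P))}

/-- Equivalence flipping a ground literal with non-equality predicate `P` preserves
satisfaction of all ground instances of the congruence axiom for `P`, given that `α`
satisfies reflexivity, symmetry and transitivity of `≈` on ground terms (flipping
leaves all equality atoms unchanged). -/
theorem stmt10 {V Fn P : Type} (α : PAssign V Fn (PSym P)) (p0 : P) (pol : Bool)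
    (us : List (Term V Fn)) (hus : ∀ u ∈ us, u.IsGround)
    (hcongr : ∀ ts ss : List (Term V Fn), ts.length = ss.length →
      (∀ t ∈ ts ++ ss, t.IsGround) → satC α (congrInst (PSym.pr p0) ts ss))
    (hrefl : ∀ t : Term V Fn, t.IsGround → α ⟨.eq, [t, t]⟩ = true)
    (hsymm : ∀ s t : Term V Fn, s.IsGround → t.IsGround →
      α ⟨.eq, [s, t]⟩ = true → α ⟨.eq, [t, s]⟩ = true)
    (htrans : ∀ r s t : Term V Fn, r.IsGround → s.IsGround → t.IsGround →
      α ⟨.eq, [r, s]⟩ = true → α ⟨.eq, [s, t]⟩ = true → α ⟨.eq, [r, t]⟩ = true)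
    -- the flipped assignment agrees with `α` on all equality atoms
    (hagree : ∀ args : List (Term V Fn),
      eqFlip α ⟨pol, ⟨PSym.pr p0, us⟩⟩ ⟨.eq, args⟩ = α ⟨.eq, args⟩) :
    ∀ ts ss : List (Term V Fn), ts.length = ss.length → (∀ t ∈ ts ++ ss, t.IsGround) →
      satC (eqFlip α ⟨pol, ⟨PSym.pr p0, us⟩⟩) (congrInst (PSym.pr p0) ts ss) := by
  intro ts ss hlen hground
  classical
  set L : Lit V Fn (PSym P) := ⟨pol, ⟨PSym.pr p0, us⟩⟩ with hL
  set β := eqFlip α L with hβ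
  have hgt : ∀ t ∈ ts, t.IsGround := fun t ht => hground t (List.mem_append_left _ ht)
  have hgs : ∀ s ∈ ss, s.IsGround := fun s hs => hground s (List.mem_append_right _ hs)
  have hflipeq : ∀ args : List (Term V Fn),
      β ⟨PSym.pr p0, args⟩ =
        if args.length = us.length ∧ (∀ p ∈ us.zip args, α ⟨.eq, [p.1, p.2]⟩ = true)
        then !(α ⟨PSym.pr p0, args⟩) else α ⟨PSym.pr p0, args⟩ := by
    intro args
    simp [hβ, hL, eqFlip]
  have hmem : ∀ (as bs : List (Term V Fn)) (l : Lit V Fn (PSym P)),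
      l ∈ congrInst (PSym.pr p0) as bs ↔
      (l = ⟨false, ⟨PSym.pr p0, as⟩⟩ ∨ (∃ a b, (a, b) ∈ as.zip bs ∧ neqL a b = l) ∨
        l = ⟨true, ⟨PSym.pr p0, bs⟩⟩) := by
    intro as bs l; simp [congrInst]
  by_cases hall : ∀ q ∈ ts.zip ss, α ⟨.eq, [q.1, q.2]⟩ = true
  · -- all equations between ts and ss hold under α
    -- the flip conditions for ts and ss are equivalent
    have hcond : (∀ p ∈ us.zip ts, α ⟨.eq, [p.1, p.2]⟩ = true) ↔
        (∀ p ∈ us.zip ss, α ⟨.eq, [p.1, p.2]⟩ = true) := by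
      constructor
      · intro h p hp
        obtain ⟨i, hi, hpe⟩ := List.getElem_of_mem hp
        have hi1 : i < us.length := lt_of_lt_of_le hi (by simp [List.length_zip])
        have hi3 : i < ss.length := lt_of_lt_of_le hi (by simp [List.length_zip])
        have hi2 : i < ts.length := hlen ▸ hi3
        have h1 : α ⟨.eq, [us[i], ts[i]]⟩ = true := by
          have := h (us[i], ts[i]) (by
            have : (us.zip ts)[i]'(by simp [List.length_zip]; omega) = (us[i], ts[i]) :=
              List.getElem_zip ..
            exact this ▸ List.getElem_mem _)
          exact this
        have h2 : α ⟨.eq, [ts[i], ss[i]]⟩ = true := by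
          have := hall (ts[i], ss[i]) (by
            have : (ts.zip ss)[i]'(by simp [List.length_zip]; omega) = (ts[i], ss[i]) :=
              List.getElem_zip ..
            exact this ▸ List.getElem_mem _)
          exact this
        have hpe' : p = (us[i], ss[i]) := by
          rw [← hpe]; exact List.getElem_zip ..
        rw [hpe']
        exact htrans _ _ _ (hus _ (List.getElem_mem _)) (hgt _ (List.getElem_mem _))
          (hgs _ (List.getElem_mem _)) h1 h2
      · intro h p hp
        obtain ⟨i, hi, hpe⟩ := List.getElem_of_mem hp
        have hi1 : i < us.length := lt_of_lt_of_le hi (by simp [List.length_zip])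
        have hi2 : i < ts.length := lt_of_lt_of_le hi (by simp [List.length_zip])
        have hi3 : i < ss.length := hlen ▸ hi2
        have h1 : α ⟨.eq, [us[i], ss[i]]⟩ = true := by
          have := h (us[i], ss[i]) (by
            have : (us.zip ss)[i]'(by simp [List.length_zip]; omega) = (us[i], ss[i]) :=
              List.getElem_zip ..
            exact this ▸ List.getElem_mem _)
          exact this
        have h2 : α ⟨.eq, [ss[i], ts[i]]⟩ = true := by
          apply hsymm _ _ (hgt _ (List.getElem_mem _)) (hgs _ (List.getElem_mem _))
          have := hall (ts[i], ss[i]) (by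
            have : (ts.zip ss)[i]'(by simp [List.length_zip]; omega) = (ts[i], ss[i]) :=
              List.getElem_zip ..
            exact this ▸ List.getElem_mem _)
          exact this
        have hpe' : p = (us[i], ts[i]) := by
          rw [← hpe]; exact List.getElem_zip ..
        rw [hpe']
        exact htrans _ _ _ (hus _ (List.getElem_mem _)) (hgs _ (List.getElem_mem _))
          (hgt _ (List.getElem_mem _)) h1 h2
    have hcondfull : (ts.length = us.length ∧ (∀ p ∈ us.zip ts, α ⟨.eq, [p.1, p.2]⟩ = true)) ↔
        (ss.length = us.length ∧ (∀ p ∈ us.zip ss, α ⟨.eq, [p.1, p.2]⟩ = true)) := by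
      rw [hlen, hcond]
    by_cases hflip : ss.length = us.length ∧ (∀ p ∈ us.zip ss, α ⟨.eq, [p.1, p.2]⟩ = true)
    · -- both atoms get flipped; use the swapped congruence instance for α
      have hβt : β ⟨PSym.pr p0, ts⟩ = !(α ⟨PSym.pr p0, ts⟩) := by
        rw [hflipeq, if_pos (hcondfull.mpr hflip)]
      have hβs : β ⟨PSym.pr p0, ss⟩ = !(α ⟨PSym.pr p0, ss⟩) := by
        rw [hflipeq, if_pos hflip]
      obtain ⟨l, hl, hlt⟩ := hcongr ss ts hlen.symm (by
        intro t ht; rcases List.mem_append.mp ht with h | h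
        exacts [hgs t h, hgt t h])
      rw [hmem] at hl
      rcases hl with rfl | ⟨a, b, hab, rfl⟩ | rfl
      · -- α(p ss) = false, so β(p ss) = true: positive literal works
        refine ⟨⟨true, ⟨PSym.pr p0, ss⟩⟩, ?_, ?_⟩
        · rw [hmem]; right; right; rfl
        · simp only [litTrue] at hlt ⊢
          rw [hβs]; simp [hlt]
      · -- a disequation s_i ≉ t_i is α-true: contradiction with hall (via symmetry)
        exfalso
        have hmem' : (b, a) ∈ ts.zip ss := by
          obtain ⟨i, hi, hpe⟩ := List.getElem_of_mem hab
          have hi3 : i < ss.length := lt_of_lt_of_le hi (by simp [List.length_zip])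
          have hi2 : i < ts.length := hlen ▸ hi3
          have hq1 : (a, b) = (ss[i], ts[i]) := by rw [← hpe]; exact List.getElem_zip ..
          rw [show b = ts[i] from congrArg Prod.snd hq1, show a = ss[i] from congrArg Prod.fst hq1]
          have : (ts.zip ss)[i]'(by simp [List.length_zip]; omega) = (ts[i], ss[i]) :=
            List.getElem_zip ..
          exact this ▸ List.getElem_mem _
        have h1 := hall _ hmem'
        have h2 : α ⟨.eq, [a, b]⟩ = true :=
          hsymm _ _ (hgt _ (List.of_mem_zip hmem').1) (hgs _ (List.of_mem_zip hmem').2) h1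
        simp [litTrue, neqL] at hlt
        rw [hlt] at h2; exact Bool.false_ne_true h2
      · -- α(p ts) = true, so β(p ts) = false: negative literal works
        refine ⟨⟨false, ⟨PSym.pr p0, ts⟩⟩, ?_, ?_⟩
        · rw [hmem]; left; rfl
        · simp only [litTrue] at hlt ⊢
          rw [hβt]; simp [hlt]
    · -- neither atom is flipped: β agrees with α on both, use hcongr directly
      have hflip' := (not_iff_not.mpr hcondfull).mpr hflip
      have hβt : β ⟨PSym.pr p0, ts⟩ = α ⟨PSym.pr p0, ts⟩ := by
        rw [hflipeq, if_neg hflip']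
      have hβs : β ⟨PSym.pr p0, ss⟩ = α ⟨PSym.pr p0, ss⟩ := by
        rw [hflipeq, if_neg hflip]
      obtain ⟨l, hl, hlt⟩ := hcongr ts ss hlen hground
      refine ⟨l, hl, ?_⟩
      rw [hmem] at hl
      rcases hl with rfl | ⟨a, b, hab, rfl⟩ | rfl
      · simpa only [litTrue, hβt] using hlt
      · simp only [litTrue, neqL] at hlt ⊢
        rw [hagree]; exact hlt
      · simpa only [litTrue, hβs] using hlt
  · -- some equation fails: the corresponding disequation is true under β
    push_neg at hall
    obtain ⟨q, hq, hqf⟩ := hall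
    refine ⟨neqL q.1 q.2, ?_, ?_⟩
    · rw [hmem]; right; left; exact ⟨q.1, q.2, by simpa using hq, rfl⟩
    · simp only [litTrue, neqL]
      rw [hagree]; simpa using hqf
end
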